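/- Let K = (0,0), L = (1,0), m = (1/2, 0), and let T = {x ∈ ℝ² : ‖x − K‖ ≤ 1, ‖x − L‖ ≤ 1, x₂ ≥ 0, ‖x − m‖ ≥ 1/2}. Then K, L ∈ T, T has diameter exactly 1, T is disjoint from the open ball of center m and radius 1/2, and T has Lebesgue measure (5π − 6√3)/24 > 0. In particular T is a set of unit diameter containing the endpoints K, L of a diameter of the circle closedBall(m, 1/2) such that 100% of its area lies outside that circle (so such a set cannot be convex). -/

import Mathlib

open MeasureTheory Real

noncomputable def pt (a b : ℝ) : EuclideanSpace ℝ (Fin 2) :=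
  (WithLp.equiv 2 (Fin 2 → ℝ)).symm ![a, b]

namespace NonconvexAux

lemma norm_sub' (x y : EuclideanSpace ℝ (Fin 2)) :
    ‖x - y‖ = Real.sqrt ((x 0 - y 0)^2 + (x 1 - y 1)^2) := by
  rw [EuclideanSpace.norm_eq]
  simp [Fin.sum_univ_two, sq_abs]

lemma norm_sub_pt (x : EuclideanSpace ℝ (Fin 2)) (a b : ℝ) :
    ‖x - pt a b‖ = Real.sqrt ((x 0 - a)^2 + (x 1 - b)^2) := by
  rw [EuclideanSpace.norm_eq]
  simp [Fin.sum_univ_two, pt, sq_abs]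

set_option maxHeartbeats 1000000 in
lemma key (x1 x2 y1 y2 : ℝ) (hx1 : x1^2+x2^2 ≤ 1)
    (hy2 : (y1-1)^2+y2^2 ≤ 1) (hy3 : 0 ≤ y2)
    (hs : y1 ≤ x1) (ht : y2 ≤ x2) :
    (x1-y1)^2+(x2-y2)^2 ≤ 1 := by
  set A := Real.sqrt (1 - x2^2) with hA
  set B := Real.sqrt (1 - y2^2) with hB
  have hx2sq : x2^2 ≤ 1 := by nlinarith [sq_nonneg x1]
  have hy2sq : y2^2 ≤ 1 := by nlinarith [sq_nonneg (y1-1)]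
  have hA2 : A^2 = 1 - x2^2 := Real.sq_sqrt (by linarith)
  have hB2 : B^2 = 1 - y2^2 := Real.sq_sqrt (by linarith)
  have hA0 : 0 ≤ A := Real.sqrt_nonneg _
  have hB0 : 0 ≤ B := Real.sqrt_nonneg _
  have hB1 : B ≤ 1 := by nlinarith [sq_nonneg (B-1)]
  have hxA : x1 ≤ A := Real.le_sqrt_of_sq_le (by linarith)
  have hyB : 1 - y1 ≤ B := Real.le_sqrt_of_sq_le (by nlinarith)
  have hs0 : 0 ≤ x1 - y1 := by linarith
  have hsum : x1 - y1 ≤ A + B - 1 := by linarith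
  have h1 : (x1-y1)^2 ≤ (A+B-1)^2 := by nlinarith
  have h2 : (x2-y2)^2 ≤ x2^2 - y2^2 := by nlinarith [mul_nonneg hy3 (sub_nonneg.2 ht)]
  have hprod : (B-1)*(A+B) ≤ 0 :=
    mul_nonpos_of_nonpos_of_nonneg (by linarith) (by linarith)
  have h3 : (A+B-1)^2 + x2^2 - y2^2 ≤ 1 := by nlinarith [hprod, hA2, hB2]
  linarith

set_option maxHeartbeats 1000000 in
lemma key2 (x1 x2 y1 y2 : ℝ) (hx1 : x1^2+x2^2 ≤ 1) (hx2 : (x1-1)^2+x2^2 ≤ 1) (hx3 : 0 ≤ x2)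
    (hy1 : y1^2+y2^2 ≤ 1) (hy2 : (y1-1)^2+y2^2 ≤ 1) (hy3 : 0 ≤ y2) :
    (x1-y1)^2+(x2-y2)^2 ≤ 1 := by
  rcases le_total y2 x2 with ht | ht
  · rcases le_total y1 x1 with hs | hs
    · exact key x1 x2 y1 y2 hx1 hy2 hy3 hs ht
    · have := key (1-x1) x2 (1-y1) y2 (by nlinarith) (by nlinarith) hy3 (by linarith) ht
      nlinarith
  · rcases le_total x1 y1 with hs | hs
    · have := key y1 y2 x1 x2 hy1 hx2 hx3 hs ht
      nlinarith
    · have := key (1-y1) y2 (1-x1) x2 (by nlinarith) (by nlinarith) hx3 (by linarith) ht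
      nlinarith

noncomputable def fm (x : ℝ) : ℝ := min (Real.sqrt (1 - x^2)) (Real.sqrt (1 - (x-1)^2))
noncomputable def gg (x : ℝ) : ℝ := Real.sqrt (1/4 - (x - 1/2)^2)

lemma cont_sq1 : Continuous (fun x : ℝ => Real.sqrt (1 - x^2)) :=
  Real.continuous_sqrt.comp (by continuity)
lemma cont_fm : Continuous fm :=
  (cont_sq1).min (Real.continuous_sqrt.comp (by continuity))
lemma cont_gg : Continuous gg := Real.continuous_sqrt.comp (by continuity)

lemma sqrt4 : Real.sqrt 4 = 2 := by
  rw [show (4:ℝ) = 2^2 by norm_num, Real.sqrt_sq (by norm_num)]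

lemma int_gg : ∫ x in (0:ℝ)..1, gg x = π/8 := by
  have h : ∀ x : ℝ, gg x = (1/2) * Real.sqrt (1 - (2*x + (-1))^2) := by
    intro x
    rw [gg, show 1 - (2*x + (-1))^2 = 4 * (1/4 - (x - 1/2)^2) by ring,
      Real.sqrt_mul (by norm_num), sqrt4]
    ring
  simp only [h]
  rw [intervalIntegral.integral_const_mul,
    intervalIntegral.integral_comp_mul_add (fun u => Real.sqrt (1 - u^2)) two_ne_zero (-1)]
  norm_num
  rw [integral_sqrt_one_sub_sq]
  ring

noncomputable def FF (x : ℝ) : ℝ := (Real.arcsin x + x * Real.sqrt (1 - x^2))/2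

lemma FF_deriv {x : ℝ} (h1 : -1 < x) (h2 : x < 1) :
    HasDerivAt FF (Real.sqrt (1 - x^2)) x := by
  have hpos : 0 < 1 - x^2 := by nlinarith
  have hsq : 0 < Real.sqrt (1 - x^2) := Real.sqrt_pos.2 hpos
  have hd1 : HasDerivAt Real.arcsin (1 / Real.sqrt (1 - x^2)) x :=
    Real.hasDerivAt_arcsin (by linarith) (by linarith)
  have hd2 : HasDerivAt (fun y : ℝ => 1 - y^2) (-(2*x)) x := by
    simpa using ((hasDerivAt_pow 2 x).const_sub 1)
  have hd3 : HasDerivAt (fun y : ℝ => Real.sqrt (1 - y^2))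
      (-(2*x) / (2 * Real.sqrt (1 - x^2))) x :=
    (Real.hasDerivAt_sqrt (ne_of_gt hpos)).comp x hd2 |>.congr_deriv (by ring)
  have hd4 : HasDerivAt (fun y : ℝ => y * Real.sqrt (1 - y^2))
      (1 * Real.sqrt (1 - x^2) + x * (-(2*x) / (2 * Real.sqrt (1 - x^2)))) x :=
    (hasDerivAt_id x).mul hd3
  have hd5 := (hd1.add hd4).div_const 2
  convert hd5 using 1
  · rfl
  · rfl
  · rfl
  have hs : Real.sqrt (1 - x^2) ^ 2 = 1 - x^2 := Real.sq_sqrt (le_of_lt hpos)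
  field_simp
  nlinarith [hs, hsq]

lemma int_I : ∫ x in (1/2 : ℝ)..1, Real.sqrt (1 - x^2) = π/6 - Real.sqrt 3/8 := by
  have hcont : ContinuousOn FF (Set.Icc (1/2) 1) :=
    ((Real.continuous_arcsin.add (continuous_id.mul
      (Real.continuous_sqrt.comp (by continuity)))).div_const 2).continuousOn
  have hderiv : ∀ x ∈ Set.Ioo (1/2 : ℝ) 1, HasDerivAt FF (Real.sqrt (1 - x^2)) x :=
    fun x hx => FF_deriv (by linarith [hx.1]) hx.2
  have hint : IntervalIntegrable (fun x => Real.sqrt (1 - x^2)) volume (1/2) 1 :=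
    cont_sq1.intervalIntegrable _ _
  rw [intervalIntegral.integral_eq_sub_of_hasDerivAt_of_le (by norm_num) hcont hderiv hint]
  have h34 : Real.sqrt (3/4) = Real.sqrt 3 / 2 := by
    rw [show (3:ℝ)/4 = 3 * (1/2)^2 by norm_num, Real.sqrt_mul (by norm_num),
      Real.sqrt_sq (by norm_num)]
    ring
  have harc : Real.arcsin (1/2) = π/6 := by
    rw [show (1:ℝ)/2 = Real.sin (π/6) by rw [Real.sin_pi_div_six],
      Real.arcsin_sin (by linarith [Real.pi_pos]) (by linarith [Real.pi_pos])]
  simp only [FF]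
  rw [show (1:ℝ) - 1^2 = 0 by norm_num, Real.sqrt_zero, Real.arcsin_one,
    show (1:ℝ) - (1/2)^2 = 3/4 by norm_num, h34, harc]
  ring

lemma int_fm : ∫ x in (0:ℝ)..1, fm x = π/3 - Real.sqrt 3/4 := by
  have i1 : IntervalIntegrable fm volume 0 (1/2) := cont_fm.intervalIntegrable _ _
  have i2 : IntervalIntegrable fm volume (1/2) 1 := cont_fm.intervalIntegrable _ _
  rw [← intervalIntegral.integral_add_adjacent_intervals i1 i2]
  have e1 : ∫ x in (0:ℝ)..(1/2), fm x
      = ∫ x in (0:ℝ)..(1/2), (fun u => Real.sqrt (1 - u^2)) (1 - x) := by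
    apply intervalIntegral.integral_congr
    intro x hx
    rw [Set.uIcc_of_le (by norm_num)] at hx
    have : Real.sqrt (1 - (x-1)^2) ≤ Real.sqrt (1 - x^2) :=
      Real.sqrt_le_sqrt (by nlinarith [hx.1, hx.2])
    simp only [fm, min_eq_right this]
    congr 1
    ring
  have e2 : ∫ x in (1/2 : ℝ)..1, fm x = ∫ x in (1/2 : ℝ)..1, Real.sqrt (1 - x^2) := by
    apply intervalIntegral.integral_congr
    intro x hx
    rw [Set.uIcc_of_le (by norm_num)] at hx
    have : Real.sqrt (1 - x^2) ≤ Real.sqrt (1 - (x-1)^2) :=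
      Real.sqrt_le_sqrt (by nlinarith [hx.1, hx.2])
    simp only [fm, min_eq_left this]
  rw [e1, e2, intervalIntegral.integral_comp_sub_left (fun u => Real.sqrt (1 - u^2)) 1]
  norm_num
  rw [int_I]
  ring

def S : Set (ℝ × ℝ) := {p | p.1^2 + p.2^2 ≤ 1 ∧ (p.1-1)^2 + p.2^2 ≤ 1 ∧ 0 ≤ p.2 ∧
  1/4 ≤ (p.1 - 1/2)^2 + p.2^2}

lemma S_meas : MeasurableSet S := by
  have hcl : IsClosed S := by
    simp only [S, Set.setOf_and]
    apply IsClosed.inter (isClosed_le (by continuity) continuous_const)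
    apply IsClosed.inter (isClosed_le (by continuity) continuous_const)
    exact IsClosed.inter (isClosed_le continuous_const (by continuity))
      (isClosed_le continuous_const (by continuity))
  exact hcl.measurableSet

lemma gg_le_fm {x : ℝ} (hx : x ∈ Set.Icc (0:ℝ) 1) : gg x ≤ fm x := by
  refine le_min (Real.sqrt_le_sqrt (by nlinarith [hx.1, hx.2]))
    (Real.sqrt_le_sqrt (by nlinarith [hx.1, hx.2]))

lemma slice_mem {x : ℝ} (hx : x ∈ Set.Icc (0:ℝ) 1) :
    (Prod.mk x ⁻¹' S) = Set.Icc (gg x) (fm x) := by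
  have h1 : (0:ℝ) ≤ 1 - x^2 := by nlinarith [hx.1, hx.2]
  have h2 : (0:ℝ) ≤ 1 - (x-1)^2 := by nlinarith [hx.1, hx.2]
  have h3 : (0:ℝ) ≤ 1/4 - (x-1/2)^2 := by nlinarith [hx.1, hx.2]
  ext y
  simp only [S, Set.mem_preimage, Set.mem_setOf_eq, Set.mem_Icc]
  constructor
  · rintro ⟨c1, c2, c3, c4⟩
    refine ⟨?_, le_min ?_ ?_⟩
    · calc gg x = Real.sqrt (1/4 - (x-1/2)^2) := rfl
        _ ≤ Real.sqrt (y^2) := Real.sqrt_le_sqrt (by linarith)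
        _ = y := Real.sqrt_sq c3
    · calc y = Real.sqrt (y^2) := (Real.sqrt_sq c3).symm
        _ ≤ Real.sqrt (1 - x^2) := Real.sqrt_le_sqrt (by linarith)
    · calc y = Real.sqrt (y^2) := (Real.sqrt_sq c3).symm
        _ ≤ Real.sqrt (1 - (x-1)^2) := Real.sqrt_le_sqrt (by linarith)
  · rintro ⟨hg, hf⟩
    have hy0 : 0 ≤ y := le_trans (Real.sqrt_nonneg _) hg
    have hfa : y ≤ Real.sqrt (1 - x^2) := le_trans hf (min_le_left _ _)
    have hfb : y ≤ Real.sqrt (1 - (x-1)^2) := le_trans hf (min_le_right _ _)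
    have ha : y^2 ≤ 1 - x^2 := by
      have := mul_le_mul hfa hfa hy0 (Real.sqrt_nonneg _)
      rwa [Real.mul_self_sqrt h1, ← sq] at this
    have hb : y^2 ≤ 1 - (x-1)^2 := by
      have := mul_le_mul hfb hfb hy0 (Real.sqrt_nonneg _)
      rwa [Real.mul_self_sqrt h2, ← sq] at this
    have hc : 1/4 - (x-1/2)^2 ≤ y^2 := by
      have := mul_le_mul hg hg (Real.sqrt_nonneg _) hy0
      simp only [gg] at this
      rwa [Real.mul_self_sqrt h3, ← sq] at this
    exact ⟨by linarith, by linarith, hy0, by linarith⟩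

lemma slice_empty {x : ℝ} (hx : x ∉ Set.Icc (0:ℝ) 1) : (Prod.mk x ⁻¹' S) = ∅ := by
  ext y
  simp only [S, Set.mem_preimage, Set.mem_setOf_eq, Set.mem_empty_iff_false, iff_false]
  rintro ⟨c1, c2, c3, c4⟩
  exact hx ⟨by nlinarith [sq_nonneg y], by nlinarith [sq_nonneg y]⟩

lemma vol_S : volume S = ENNReal.ofReal (∫ x in (0:ℝ)..1, (fm x - gg x)) := by
  rw [Measure.volume_eq_prod, Measure.prod_apply S_meas]
  have hslice : ∀ x : ℝ, volume (Prod.mk x ⁻¹' S)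
      = Set.indicator (Set.Icc (0:ℝ) 1) (fun x => ENNReal.ofReal (fm x - gg x)) x := by
    intro x
    by_cases hx : x ∈ Set.Icc (0:ℝ) 1
    · rw [slice_mem hx, Real.volume_Icc, Set.indicator_of_mem hx]
    · rw [slice_empty hx, Set.indicator_of_notMem hx, measure_empty]
  simp only [hslice]
  rw [lintegral_indicator measurableSet_Icc,
    ← ofReal_integral_eq_lintegral_ofReal (f := fun x => fm x - gg x)
      ((cont_fm.sub cont_gg).integrableOn_Icc)
      ((ae_restrict_iff' measurableSet_Icc).2 (ae_of_all _ fun x hx => by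
        simp only [Pi.zero_apply, sub_nonneg]; exact gg_le_fm hx))]
  congr 1
  rw [intervalIntegral.integral_of_le (by norm_num : (0:ℝ) ≤ 1),
    ← MeasureTheory.integral_Icc_eq_integral_Ioc]

lemma vol_S' : volume S = ENNReal.ofReal ((5 * π - 6 * Real.sqrt 3) / 24) := by
  rw [vol_S, intervalIntegral.integral_sub (cont_fm.intervalIntegrable _ _)
    (cont_gg.intervalIntegrable _ _), int_fm, int_gg]
  congr 1
  ring

end NonconvexAux

open NonconvexAux in
theorem nonconvex_fully_outside
    (T : Set (EuclideanSpace ℝ (Fin 2)))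
    (hT : T = {x : EuclideanSpace ℝ (Fin 2) |
        ‖x - pt 0 0‖ ≤ 1 ∧ ‖x - pt 1 0‖ ≤ 1 ∧ 0 ≤ x 1 ∧
        1/2 ≤ ‖x - pt (1/2) 0‖}) :
    pt 0 0 ∈ T ∧ pt 1 0 ∈ T ∧
    Metric.diam T = 1 ∧
    Disjoint T (Metric.ball (pt (1/2) 0) (1/2)) ∧
    volume T = ENNReal.ofReal ((5 * π - 6 * Real.sqrt 3) / 24) ∧
    0 < volume T ∧
    ¬ Convex ℝ T := by
  -- squared membership characterization
  have hmem : ∀ x : EuclideanSpace ℝ (Fin 2), x ∈ T ↔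
      ((x 0)^2 + (x 1)^2 ≤ 1 ∧ (x 0 - 1)^2 + (x 1)^2 ≤ 1 ∧ 0 ≤ x 1 ∧
        1/4 ≤ (x 0 - 1/2)^2 + (x 1)^2) := by
    intro x
    rw [hT]
    simp only [Set.mem_setOf_eq, norm_sub_pt]
    constructor
    · rintro ⟨h1, h2, h3, h4⟩
      refine ⟨?_, ?_, h3, ?_⟩
      · have := (Real.sqrt_le_left (by norm_num : (0:ℝ) ≤ 1)).1 h1
        simpa using this
      · have := (Real.sqrt_le_left (by norm_num : (0:ℝ) ≤ 1)).1 h2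
        simpa using this
      · have := (Real.le_sqrt (by norm_num) (by positivity)).1 h4
        norm_num at this ⊢
        linarith
    · rintro ⟨h1, h2, h3, h4⟩
      refine ⟨?_, ?_, h3, ?_⟩
      · apply (Real.sqrt_le_left (by norm_num : (0:ℝ) ≤ 1)).2
        simpa using h1
      · apply (Real.sqrt_le_left (by norm_num : (0:ℝ) ≤ 1)).2
        simpa using h2
      · apply (Real.le_sqrt (by norm_num) (by positivity)).2
        norm_num
        linarith
  have hK : pt 0 0 ∈ T := by
    rw [hmem]
    norm_num [pt]
  have hL : pt 1 0 ∈ T := by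
    rw [hmem]
    norm_num [pt]
  -- diameter
  have hdistKL : dist (pt 0 0) (pt 1 0) = 1 := by
    rw [dist_eq_norm, norm_sub_pt]
    norm_num [pt]
  have hbdd : T ⊆ Metric.closedBall (pt 0 0) 1 := by
    intro x hx
    rw [hmem] at hx
    rw [Metric.mem_closedBall, dist_eq_norm, norm_sub_pt]
    apply (Real.sqrt_le_left (by norm_num : (0:ℝ) ≤ 1)).2
    have := hx.1
    nlinarith [hx.1]
  have hdiam_le : Metric.diam T ≤ 1 := by
    apply Metric.diam_le_of_forall_dist_le (by norm_num)
    intro x hx y hy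
    rw [hmem] at hx hy
    rw [dist_eq_norm, norm_sub']
    apply (Real.sqrt_le_left (by norm_num : (0:ℝ) ≤ 1)).2
    have := key2 (x 0) (x 1) (y 0) (y 1) (by linarith [hx.1]) (by linarith [hx.2.1])
      hx.2.2.1 (by linarith [hy.1]) (by linarith [hy.2.1]) hy.2.2.1
    calc (x 0 - y 0)^2 + (x 1 - y 1)^2 ≤ 1 := this
      _ = 1^2 := by norm_num
  have hdiam : Metric.diam T = 1 := by
    apply le_antisymm hdiam_le
    calc (1:ℝ) = dist (pt 0 0) (pt 1 0) := hdistKL.symm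
      _ ≤ Metric.diam T := Metric.dist_le_diam_of_mem
          (Metric.isBounded_closedBall.subset hbdd) hK hL
  -- disjointness
  have hdisj : Disjoint T (Metric.ball (pt (1/2) 0) (1/2)) := by
    rw [Set.disjoint_left]
    intro x hx hball
    rw [hT] at hx
    rw [Metric.mem_ball, dist_eq_norm] at hball
    linarith [hx.2.2.2]
  -- volume
  have hmp : MeasurePreserving
      ((MeasurableEquiv.finTwoArrow : (Fin 2 → ℝ) ≃ᵐ ℝ × ℝ) ∘
        (MeasurableEquiv.toLp 2 (Fin 2 → ℝ)).symm) volume volume :=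
    (volume_preserving_finTwoArrow ℝ).comp
      (EuclideanSpace.volume_preserving_symm_measurableEquiv_toLp (Fin 2))
  have hpre : T = ((MeasurableEquiv.finTwoArrow : (Fin 2 → ℝ) ≃ᵐ ℝ × ℝ) ∘
        (MeasurableEquiv.toLp 2 (Fin 2 → ℝ)).symm) ⁻¹' S := by
    ext x
    rw [hmem]
    rfl
  have hvol : volume T = ENNReal.ofReal ((5 * π - 6 * Real.sqrt 3) / 24) := by
    rw [hpre, hmp.measure_preimage S_meas.nullMeasurableSet, vol_S']
  refine ⟨hK, hL, hdiam, hdisj, hvol, ?_, ?_⟩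
  · rw [hvol]
    apply ENNReal.ofReal_pos.2
    have hs3 : Real.sqrt 3 < 1.8 := by
      rw [show (1.8:ℝ) = Real.sqrt (1.8^2) by rw [Real.sqrt_sq]; norm_num]
      apply Real.sqrt_lt_sqrt (by norm_num)
      norm_num
    nlinarith [Real.pi_gt_three]
  · intro hconv
    have hmid := hconv hK hL (by norm_num : (0:ℝ) ≤ 1/2) (by norm_num : (0:ℝ) ≤ 1/2)
      (by norm_num)
    have heq : (1/2 : ℝ) • pt 0 0 + (1/2 : ℝ) • pt 1 0 = pt (1/2) 0 := by
      ext i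
      fin_cases i <;> simp [pt]
    rw [heq, hmem] at hmid
    have := hmid.2.2.2
    norm_num [pt] at this
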